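/- Let $P\subset\mathbb{R}^d$ be a polytope (convex hull of finitely many points). Then there is a constant $K$ depending only on $P$ such that for every $x\in\mathbb{R}^d$ and every real $t>1$, $\big|\,|(tP-x)\cap\mathbb{Z}^d| - \lambda(P)t^d\,\big| \le K t^{d-1}$. -/

import Mathlib

set_option maxHeartbeats 1000000

open MeasureTheory Set Pointwise ENNReal

/-- binomial-type bound -/
lemma stmt13_pow_aux (d : ℕ) {t u a : ℝ} (ht : 1 ≤ t) (ha : 0 ≤ a) (hu : 0 ≤ u) (hut : u ≤ t) :
    (u + a) ^ d ≤ u ^ d + ((1 + a) ^ d - 1) * t ^ (d - 1) := by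
  induction d with
  | zero => simp
  | succ d ih =>
    have ht0 : (0:ℝ) ≤ t := le_trans zero_le_one ht
    have hC : (0:ℝ) ≤ (1 + a) ^ d - 1 := by
      have : (1:ℝ) ≤ (1 + a) ^ d := one_le_pow₀ (by linarith)
      linarith
    cases d with
    | zero => simp
    | succ e =>
      have ih' : (u + a) ^ (e+1) ≤ u ^ (e+1) + ((1 + a) ^ (e+1) - 1) * t ^ e := by
        simpa using ih
      have hCe : (0:ℝ) ≤ (1 + a) ^ (e+1) - 1 := by
        have : (1:ℝ) ≤ (1 + a) ^ (e+1) := one_le_pow₀ (by linarith)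
        linarith
      have h1 : (u + a) ^ (e + 2) = (u + a) ^ (e+1) * (u + a) := by ring
      have h2 : (u + a) ^ (e+1) * (u + a)
          ≤ (u ^ (e+1) + ((1 + a) ^ (e+1) - 1) * t ^ e) * (u + a) := by
        apply mul_le_mul_of_nonneg_right ih' (by linarith)
      have hue : u ^ (e+1) ≤ t ^ (e+1) := pow_le_pow_left₀ hu hut _
      have hte : t ^ e ≤ t ^ (e+1) := pow_le_pow_right₀ ht (by omega)
      have htu : t ^ e * u ≤ t ^ (e+1) := by
        calc t ^ e * u ≤ t ^ e * t := by
              apply mul_le_mul_of_nonneg_left hut (pow_nonneg ht0 _)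
          _ = t ^ (e+1) := by ring
      have h3 : (u ^ (e+1) + ((1 + a) ^ (e+1) - 1) * t ^ e) * (u + a)
          ≤ u ^ (e+2) + ((1 + a) ^ (e+2) - 1) * t ^ (e+1) := by
        have e1 : (u ^ (e+1) + ((1 + a) ^ (e+1) - 1) * t ^ e) * (u + a)
            = u ^ (e+2) + a * u ^ (e+1) + ((1 + a) ^ (e+1) - 1) * (t ^ e * u)
              + a * (((1 + a) ^ (e+1) - 1) * t ^ e) := by ring
        have b1 : a * u ^ (e+1) ≤ a * t ^ (e+1) := mul_le_mul_of_nonneg_left hue ha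
        have b2 : ((1 + a) ^ (e+1) - 1) * (t ^ e * u) ≤ ((1 + a) ^ (e+1) - 1) * t ^ (e+1) :=
          mul_le_mul_of_nonneg_left htu hCe
        have b3 : a * (((1 + a) ^ (e+1) - 1) * t ^ e) ≤ a * (((1 + a) ^ (e+1) - 1) * t ^ (e+1)) :=
          mul_le_mul_of_nonneg_left (mul_le_mul_of_nonneg_left hte hCe) ha
        have e2 : a * t^(e+1) + ((1+a)^(e+1) - 1) * t^(e+1) + a * (((1+a)^(e+1)-1) * t^(e+1))
            = ((1 + a) ^ (e+2) - 1) * t ^ (e+1) := by ring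
        nlinarith [b1, b2, b3]
      calc (u + a) ^ (e + 2) = (u + a) ^ (e+1) * (u + a) := h1
        _ ≤ _ := h2
        _ ≤ u ^ (e+2) + ((1 + a) ^ (e+2) - 1) * t ^ (e+1) := h3
        _ = u ^ (e+2) + ((1 + a) ^ (e+2) - 1) * t ^ ((e+2) - 1) := by norm_num

noncomputable def stmt13_lat (d : ℕ) : (Fin d → ℤ) → (Fin d → ℝ) := fun n i => (n i : ℝ)

lemma stmt13_lat_inj (d : ℕ) : Function.Injective (stmt13_lat d) := by
  intro a b h
  funext i
  have : ((a i : ℝ)) = b i := congrFun h i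
  exact_mod_cast this

def stmt13_cell {d : ℕ} (n : Fin d → ℤ) : Set (Fin d → ℝ) :=
  Set.univ.pi fun i => Set.Ico (n i : ℝ) (n i + 1)

lemma stmt13_cell_meas {d : ℕ} (n : Fin d → ℤ) : MeasurableSet (stmt13_cell n) :=
  MeasurableSet.univ_pi fun _ => measurableSet_Ico

lemma stmt13_volume_cell {d : ℕ} (n : Fin d → ℤ) : volume (stmt13_cell n) = 1 := by
  rw [stmt13_cell, volume_pi_pi]
  simp [Real.volume_Ico]

lemma stmt13_mem_cell {d : ℕ} {y : Fin d → ℝ} {n : Fin d → ℤ} :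
    y ∈ stmt13_cell n ↔ ∀ i, ⌊y i⌋ = n i := by
  simp only [stmt13_cell, Set.mem_pi, Set.mem_univ, forall_true_left, Set.mem_Ico]
  constructor
  · intro h i
    exact (Int.floor_eq_iff.mpr ⟨(h i).1, (h i).2⟩)
  · intro h i
    constructor
    · rw [← h i]; exact Int.floor_le _
    · rw [← h i]; exact Int.lt_floor_add_one _

lemma stmt13_cell_disj {d : ℕ} : Pairwise (Function.onFun Disjoint (stmt13_cell (d := d))) := by
  intro n m hnm
  rw [Function.onFun, Set.disjoint_left]
  intro y hy hy'
  apply hnm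
  funext i
  rw [← stmt13_mem_cell.mp hy i, ← stmt13_mem_cell.mp hy' i]

/-- Core counting lemma -/
lemma stmt13_count (d : ℕ) (A : Set (Fin d → ℝ)) (ctr : Fin d → ℝ) (r : ℝ)
    (hA : ∀ p ∈ A, ‖p - ctr‖ ≤ r) :
    ∃ F : Finset (Fin d → ℤ),
      (↑F : Set (Fin d → ℤ)) =
        {n | stmt13_lat d n ∈ A ∧ n ∈ Finset.Icc (fun i => ⌈ctr i - r⌉) (fun i => ⌊ctr i + r⌋)} ∧
      A ∩ {p | ∀ i, ∃ k : ℤ, p i = k} = stmt13_lat d '' ↑F ∧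
      (F.card : ℝ≥0∞) ≤ volume (A + stmt13_cell (0 : Fin d → ℤ)) ∧
      volume {y : Fin d → ℝ | ∀ w : Fin d → ℝ, ‖w - y‖ ≤ 1 → w ∈ A} ≤ (F.card : ℝ≥0∞) := by
  classical
  set a : Fin d → ℤ := fun i => ⌈ctr i - r⌉ with ha
  set b : Fin d → ℤ := fun i => ⌊ctr i + r⌋ with hb
  set F : Finset (Fin d → ℤ) := (Finset.Icc a b).filter (fun n => stmt13_lat d n ∈ A) with hF
  have hmemF : ∀ n : Fin d → ℤ, n ∈ F ↔ stmt13_lat d n ∈ A ∧ n ∈ Finset.Icc a b := by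
    intro n; simp [hF, and_comm]
  -- membership of lattice points of A in the Icc box
  have hbox : ∀ n : Fin d → ℤ, stmt13_lat d n ∈ A → n ∈ Finset.Icc a b := by
    intro n hn
    rw [Finset.mem_Icc]
    constructor <;> intro i
    · have h1 : ‖(stmt13_lat d n - ctr) i‖ ≤ r :=
        le_trans (norm_le_pi_norm (stmt13_lat d n - ctr) i) (hA _ hn)
      have : |((n i : ℝ)) - ctr i| ≤ r := h1
      have : ctr i - r ≤ (n i : ℝ) := by
        rw [abs_le] at this; linarith
      exact Int.ceil_le.mpr this
    · have h1 : ‖(stmt13_lat d n - ctr) i‖ ≤ r :=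
        le_trans (norm_le_pi_norm (stmt13_lat d n - ctr) i) (hA _ hn)
      have : |((n i : ℝ)) - ctr i| ≤ r := h1
      have : (n i : ℝ) ≤ ctr i + r := by rw [abs_le] at this; linarith
      exact Int.le_floor.mpr this
  refine ⟨F, ?_, ?_, ?_, ?_⟩
  · ext n; simp [hmemF n]
  · ext p
    simp only [Set.mem_inter_iff, Set.mem_setOf_eq, Set.mem_image, Finset.mem_coe]
    constructor
    · rintro ⟨hpA, hplat⟩
      choose k hk using hplat
      have hp : p = stmt13_lat d k := funext hk
      refine ⟨k, ?_, hp.symm⟩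
      rw [hmemF]
      exact ⟨hp ▸ hpA, hbox k (hp ▸ hpA)⟩
    · rintro ⟨n, hn, rfl⟩
      exact ⟨((hmemF n).mp hn).1, fun i => ⟨n i, rfl⟩⟩
  · -- upper bound
    have hdisj : (↑F : Set (Fin d → ℤ)).PairwiseDisjoint stmt13_cell :=
      fun n _ m _ hnm => stmt13_cell_disj hnm
    have hcells : (F.card : ℝ≥0∞) = volume (⋃ n ∈ F, stmt13_cell n) := by
      rw [measure_biUnion_finset hdisj fun n _ => stmt13_cell_meas n]
      simp [stmt13_volume_cell]
    rw [hcells]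
    apply measure_mono
    intro y hy
    simp only [Set.mem_iUnion] at hy
    obtain ⟨n, hn, hyn⟩ := hy
    have hnA : stmt13_lat d n ∈ A := ((hmemF n).mp hn).1
    have : y = stmt13_lat d n + (y - stmt13_lat d n) := by ring
    rw [this]
    apply Set.add_mem_add hnA
    rw [stmt13_mem_cell] at hyn
    intro i _
    simp only [Pi.sub_apply, Set.mem_Ico, Pi.zero_apply, Int.cast_zero]
    constructor
    · have := Int.floor_le (y i); rw [hyn i] at this
      simpa [stmt13_lat] using this
    · have := Int.lt_floor_add_one (y i); rw [hyn i] at this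
      have hr : stmt13_lat d n i = (n i : ℝ) := rfl
      rw [hr]; linarith
  · -- lower bound
    have hsub : {y : Fin d → ℝ | ∀ w : Fin d → ℝ, ‖w - y‖ ≤ 1 → w ∈ A}
        ⊆ ⋃ n ∈ F, stmt13_cell n := by
      intro y hy
      set n : Fin d → ℤ := fun i => ⌊y i⌋ with hn
      have hwnorm : ‖stmt13_lat d n - y‖ ≤ 1 := by
        apply pi_norm_le_iff_of_nonneg zero_le_one |>.mpr
        intro i
        have h1 : (n i : ℝ) ≤ y i := Int.floor_le _
        have h2 : y i - 1 < (n i : ℝ) := Int.sub_one_lt_floor _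
        simp only [Pi.sub_apply]
        have hr : stmt13_lat d n i = (n i : ℝ) := rfl
        rw [Real.norm_eq_abs, abs_le, hr]
        constructor <;> linarith
      have hwA : stmt13_lat d n ∈ A := hy _ hwnorm
      simp only [Set.mem_iUnion]
      exact ⟨n, (hmemF n).mpr ⟨hwA, hbox n hwA⟩, stmt13_mem_cell.mpr fun i => rfl⟩
    calc volume {y : Fin d → ℝ | ∀ w : Fin d → ℝ, ‖w - y‖ ≤ 1 → w ∈ A}
        ≤ volume (⋃ n ∈ F, stmt13_cell n) := measure_mono hsub
      _ = ∑ n ∈ F, volume (stmt13_cell n) := measure_biUnion_finset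
          (fun n _ m _ hnm => stmt13_cell_disj hnm) (fun n _ => stmt13_cell_meas n)
      _ = (F.card : ℝ≥0∞) := by simp [stmt13_volume_cell]


lemma stmt13_lat_def (d : ℕ) (n : Fin d → ℤ) (i : Fin d) : stmt13_lat d n i = (n i : ℝ) := rfl

lemma stmt13_cell0_norm {d : ℕ} {w : Fin d → ℝ} (h : w ∈ stmt13_cell (0 : Fin d → ℤ)) :
    ‖w‖ ≤ 1 := by
  apply pi_norm_le_iff_of_nonneg zero_le_one |>.mpr
  intro i
  have hi := Set.mem_univ_pi.mp h i
  simp only [Pi.zero_apply, Int.cast_zero, Set.mem_Ico, zero_add] at hi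
  rw [Real.norm_eq_abs, abs_le]
  constructor <;> linarith [hi.1, hi.2]

lemma stmt13_degenerate (d : ℕ) (V : Finset (Fin d → ℝ)) (v₀ : Fin d → ℝ) (hv₀ : v₀ ∈ V)
    (R : ℝ) (hR1 : 1 ≤ R)
    (hPR : convexHull ℝ (V : Set (Fin d → ℝ)) ⊆ Metric.closedBall 0 R)
    (hdeg : ¬ (interior (convexHull ℝ (V : Set (Fin d → ℝ)))).Nonempty) :
    ∃ K : ℝ, ∀ x : Fin d → ℝ, ∀ t : ℝ, 1 < t →
      |(Set.ncard ({p : Fin d → ℝ |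
            ∃ q ∈ convexHull ℝ (V : Set (Fin d → ℝ)), p = t • q - x} ∩
          {p : Fin d → ℝ | ∀ i, ∃ n : ℤ, p i = n}) : ℝ) -
        (MeasureTheory.volume (convexHull ℝ (V : Set (Fin d → ℝ)))).toReal * t ^ d|
        ≤ K * t ^ (d - 1) := by
  classical
  set P : Set (Fin d → ℝ) := convexHull ℝ (V : Set (Fin d → ℝ)) with hPdef
  have hconv : Convex ℝ P := convex_convexHull ℝ _
  have hspan : ¬ affineSpan ℝ P = ⊤ := by
    rwa [hconv.interior_nonempty_iff_affineSpan_eq_top] at hdeg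
  have hvol : volume P = 0 :=
    measure_mono_null (subset_affineSpan ℝ P) (Measure.addHaar_affineSubspace volume _ hspan)
  have hPne : v₀ ∈ P := subset_convexHull ℝ _ hv₀
  set W : Submodule ℝ (Fin d → ℝ) := (affineSpan ℝ P).direction with hWdef
  have hW : W ≠ ⊤ := by
    intro h
    exact hspan ((AffineSubspace.direction_eq_top_iff_of_nonempty
      ⟨v₀, subset_affineSpan ℝ P hPne⟩).mp h)
  obtain ⟨f, hf0, hfmap⟩ :=
    Submodule.exists_dual_map_eq_bot_of_lt_top (lt_top_iff_ne_top.mpr hW) inferInstance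
  have hfW : ∀ w ∈ W, f w = 0 := by
    intro w hw
    have : f w ∈ Submodule.map f W := Submodule.mem_map_of_mem hw
    rw [hfmap] at this
    simpa using this
  set u : Fin d → ℝ := fun i => f (fun j => if i = j then 1 else 0) with hu
  obtain ⟨i₀, hi₀⟩ : ∃ i₀, u i₀ ≠ 0 := by
    by_contra h
    push_neg at h
    apply hf0
    apply LinearMap.ext
    intro z
    rw [LinearMap.pi_apply_eq_sum_univ f z]
    exact Finset.sum_eq_zero fun i _ => by
      have hui : (f fun j => if i = j then 1 else 0) = u i := rfl
      rw [hui, h i]; simp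
  refine ⟨(2*R+1)^d, fun x t ht => ?_⟩
  have ht0 : (0:ℝ) < t := lt_trans one_pos ht
  set A : Set (Fin d → ℝ) := {p | ∃ q ∈ P, p = t • q - x} with hAdef
  have hA : ∀ p ∈ A, ‖p - (-x)‖ ≤ t * R := by
    rintro p ⟨q, hq, rfl⟩
    have h1 : t • q - x - (-x) = t • q := by abel
    rw [h1, norm_smul, Real.norm_eq_abs, abs_of_pos ht0]
    exact mul_le_mul_of_nonneg_left (mem_closedBall_zero_iff.mp (hPR hq)) (le_of_lt ht0)
  obtain ⟨F, hFcoe, hFim, hFup, hFlo⟩ := stmt13_count d A (-x) (t * R) hA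
  have hNcard : Set.ncard (A ∩ {p : Fin d → ℝ | ∀ i, ∃ n : ℤ, p i = n}) = F.card := by
    rw [hFim, Set.ncard_image_of_injective _ (stmt13_lat_inj d), Set.ncard_coe_finset]
  -- injectivity of forgetting coordinate i₀ on F
  have hmemA : ∀ n ∈ F, stmt13_lat d n ∈ A := by
    intro n hn
    have : n ∈ (↑F : Set (Fin d → ℤ)) := hn
    rw [hFcoe] at this
    exact this.1
  have hinj : Set.InjOn (fun n => Function.update n i₀ (0:ℤ)) (↑F : Set (Fin d → ℤ)) := by
    intro n hn m hm hupd
    have hcoord : ∀ i, i ≠ i₀ → n i = m i := by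
      intro i hi
      have h1 := congrFun hupd i
      simpa [Function.update_of_ne hi] using h1
    obtain ⟨q₁, hq₁, he₁⟩ := hmemA n hn
    obtain ⟨q₂, hq₂, he₂⟩ := hmemA m hm
    have hdiff : stmt13_lat d n - stmt13_lat d m = t • (q₁ - q₂) := by
      rw [he₁, he₂, smul_sub]; abel
    have hWmem : q₁ - q₂ ∈ W := by
      have := AffineSubspace.vsub_mem_direction
        (subset_affineSpan ℝ P hq₁) (subset_affineSpan ℝ P hq₂)
      simpa [vsub_eq_sub] using this
    have hfd : f (stmt13_lat d n) - f (stmt13_lat d m) = 0 := by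
      rw [← map_sub, hdiff, _root_.map_smul, hfW _ hWmem, smul_zero]
    have hfn : f (stmt13_lat d n) = ∑ i, stmt13_lat d n i * u i :=
      LinearMap.pi_apply_eq_sum_univ f _
    have hfm : f (stmt13_lat d m) = ∑ i, stmt13_lat d m i * u i :=
      LinearMap.pi_apply_eq_sum_univ f _
    have hsum : (∑ i, (stmt13_lat d n i - stmt13_lat d m i) * u i) = 0 := by
      have e : (∑ i, (stmt13_lat d n i - stmt13_lat d m i) * u i)
          = (∑ i, stmt13_lat d n i * u i) - ∑ i, stmt13_lat d m i * u i := by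
        rw [← Finset.sum_sub_distrib]; congr 1; funext i; ring
      rw [e, ← hfn, ← hfm, hfd]
    have hsingle : (stmt13_lat d n i₀ - stmt13_lat d m i₀) * u i₀ = 0 := by
      rw [← hsum]
      symm
      apply Finset.sum_eq_single i₀
      · intro i _ hi
        rw [stmt13_lat_def, stmt13_lat_def, hcoord i hi]
        ring
      · intro h; exact absurd (Finset.mem_univ i₀) h
    have : stmt13_lat d n i₀ = stmt13_lat d m i₀ := by
      rcases mul_eq_zero.mp hsingle with h | h
      · linarith [h]
      · exact absurd h hi₀
    have hii : n i₀ = m i₀ := by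
      rw [stmt13_lat_def, stmt13_lat_def] at this
      exact_mod_cast this
    funext i
    by_cases hi : i = i₀
    · rw [hi, hii]
    · exact hcoord i hi
  -- cardinality bound
  set a : Fin d → ℤ := fun i => ⌈(-x) i - t*R⌉ with hadef
  set b : Fin d → ℤ := fun i => ⌊(-x) i + t*R⌋ with hbdef
  set a' : Fin d → ℤ := Function.update a i₀ (0:ℤ) with ha'def
  set b' : Fin d → ℤ := Function.update b i₀ (0:ℤ) with hb'def
  have hFsub : F.image (fun n => Function.update n i₀ (0:ℤ)) ⊆
      Finset.Icc a' b' := by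
    intro m hm
    rw [Finset.mem_image] at hm
    obtain ⟨n, hn, rfl⟩ := hm
    have hnIcc : n ∈ Finset.Icc a b := by
      have : n ∈ (↑F : Set (Fin d → ℤ)) := hn
      rw [hFcoe] at this
      exact this.2
    rw [Finset.mem_Icc] at hnIcc ⊢
    constructor <;> intro i <;> by_cases hi : i = i₀
    · subst hi; simp [ha'def]
    · simp only [ha'def, Function.update_of_ne hi]; exact hnIcc.1 i
    · subst hi; simp [hb'def]
    · simp only [hb'def, Function.update_of_ne hi]; exact hnIcc.2 i
  have hcardR : ((F.card : ℝ)) ≤ ((2*R+1)*t)^(d-1) := by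
    have h1 : F.card = (F.image (fun n => Function.update n i₀ (0:ℤ))).card :=
      (Finset.card_image_of_injOn hinj).symm
    have h2 : (F.image (fun n => Function.update n i₀ (0:ℤ))).card ≤
        (Finset.Icc a' b').card := Finset.card_le_card hFsub
    have h12 : F.card ≤ (Finset.Icc a' b').card := le_trans (le_of_eq h1) h2
    have h3 : (Finset.Icc a' b').card = ∏ i, (Finset.Icc (a' i) (b' i)).card :=
      Pi.card_Icc _ _
    have hfac : ∀ i : Fin d, i ≠ i₀ →
        (((Finset.Icc (a' i) (b' i)).card : ℕ) : ℝ) ≤ (2*R+1)*t := by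
      intro i hi
      have hai : a' i = a i := Function.update_of_ne hi _ _
      have hbi : b' i = b i := Function.update_of_ne hi _ _
      rw [hai, hbi, Int.card_Icc]
      have hmax : (((b i + 1 - a i).toNat : ℕ) : ℝ) = max ((b i + 1 - a i : ℤ) : ℝ) 0 := by
        have h := Int.toNat_eq_max (b i + 1 - a i)
        have h2 : (((b i + 1 - a i).toNat : ℤ) : ℝ) = ((max (b i + 1 - a i) 0 : ℤ) : ℝ) := by
          rw [h]
        rw [Int.cast_max] at h2
        push_cast at h2 ⊢
        rw [h2]
      rw [hmax]
      apply max_le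
      · have hb' : ((b i : ℝ)) ≤ (-x) i + t*R := Int.floor_le _
        have ha' : (-x) i - t*R ≤ ((a i : ℝ)) := Int.le_ceil _
        have hRt : 2*(t*R) + 1 ≤ (2*R+1)*t := by nlinarith
        push_cast
        linarith
      · positivity
    have hfaci₀ : (Finset.Icc (a' i₀) (b' i₀)).card = 1 := by
      have : a' i₀ = 0 := Function.update_self _ _ _
      have h2 : b' i₀ = 0 := Function.update_self _ _ _
      rw [this, h2]
      rfl
    have hprodsplit : (∏ i, ((Finset.Icc (a' i) (b' i)).card : ℝ))
        = ∏ i ∈ Finset.univ.erase i₀, ((Finset.Icc (a' i) (b' i)).card : ℝ) := by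
      rw [← Finset.prod_erase_mul _ _ (Finset.mem_univ i₀), hfaci₀]
      norm_num
    have hprodle : (∏ i ∈ Finset.univ.erase i₀, ((Finset.Icc (a' i) (b' i)).card : ℝ))
        ≤ ((2*R+1)*t)^(d-1) := by
      have hle := Finset.prod_le_prod (s := Finset.univ.erase i₀)
        (f := fun i => ((Finset.Icc (a' i) (b' i)).card : ℝ))
        (g := fun _ => (2*R+1)*t)
        (fun i _ => by positivity)
        (fun i hi => hfac i (Finset.ne_of_mem_erase hi))
      rwa [Finset.prod_const, Finset.card_erase_of_mem (Finset.mem_univ i₀),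
        Finset.card_univ, Fintype.card_fin] at hle
    calc ((F.card : ℝ)) ≤ (((Finset.Icc a' b').card : ℕ) : ℝ) := Nat.cast_le.mpr h12
      _ = ∏ i, ((Finset.Icc (a' i) (b' i)).card : ℝ) := by rw [h3]; push_cast; rfl
      _ = ∏ i ∈ Finset.univ.erase i₀, ((Finset.Icc (a' i) (b' i)).card : ℝ) := hprodsplit
      _ ≤ ((2*R+1)*t)^(d-1) := hprodle
  -- conclude
  rw [hNcard, hvol]
  have h0 : (0:ℝ) ≤ t ^ (d-1) := by positivity
  have hKK : ((2*R+1)*t)^(d-1) ≤ (2*R+1)^d * t^(d-1) := by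
    rw [mul_pow]
    apply mul_le_mul_of_nonneg_right _ h0
    apply pow_le_pow_right₀ (by linarith) (Nat.sub_le d 1)
  rw [ENNReal.toReal_zero, zero_mul, sub_zero, abs_of_nonneg (by positivity)]
  linarith

lemma stmt13_nondegenerate (d : ℕ) (V : Finset (Fin d → ℝ))
    (R : ℝ) (hR1 : 1 ≤ R)
    (hPR : convexHull ℝ (V : Set (Fin d → ℝ)) ⊆ Metric.closedBall 0 R)
    (c : Fin d → ℝ) (ρ : ℝ) (hρ0 : 0 < ρ) (hρ1 : ρ ≤ 1)
    (hball : Metric.closedBall c ρ ⊆ convexHull ℝ (V : Set (Fin d → ℝ))) :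
    ∃ K : ℝ, ∀ x : Fin d → ℝ, ∀ t : ℝ, 1 < t →
      |(Set.ncard ({p : Fin d → ℝ |
            ∃ q ∈ convexHull ℝ (V : Set (Fin d → ℝ)), p = t • q - x} ∩
          {p : Fin d → ℝ | ∀ i, ∃ n : ℤ, p i = n}) : ℝ) -
        (MeasureTheory.volume (convexHull ℝ (V : Set (Fin d → ℝ)))).toReal * t ^ d|
        ≤ K * t ^ (d - 1) := by
  classical
  set P : Set (Fin d → ℝ) := convexHull ℝ (V : Set (Fin d → ℝ)) with hPdef
  have hconv : Convex ℝ P := convex_convexHull ℝ _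
  have hμPfin : volume P ≠ ⊤ :=
    (lt_of_le_of_lt (measure_mono hPR) measure_closedBall_lt_top).ne
  set vP : ℝ := (volume P).toReal with hvPdef
  have hvP0 : 0 ≤ vP := ENNReal.toReal_nonneg
  have hρinv0 : (0:ℝ) ≤ ρ⁻¹ := le_of_lt (inv_pos.mpr hρ0)
  have hρinv1 : (1:ℝ) ≤ ρ⁻¹ := by
    nlinarith [mul_inv_cancel₀ (ne_of_gt hρ0)]
  have hfinrank : Module.finrank ℝ (Fin d → ℝ) = d := Module.finrank_fin_fun ℝ
  have htrans : ∀ (v : Fin d → ℝ) (s : Set (Fin d → ℝ)), volume (v +ᵥ s) = volume s := by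
    intro v s
    have he : v +ᵥ s = (fun y => -v + y) ⁻¹' s := by
      ext y
      rw [Set.mem_vadd_set_iff_neg_vadd_mem]
      rfl
    rw [he, measure_preimage_add]
  refine ⟨vP * ((1+ρ⁻¹)^d + ρ⁻¹), fun x t ht => ?_⟩
  have ht0 : (0:ℝ) < t := lt_trans one_pos ht
  have ht1 : (1:ℝ) ≤ t := le_of_lt ht
  set A : Set (Fin d → ℝ) := {p | ∃ q ∈ P, p = t • q - x} with hAdef
  have hA : ∀ p ∈ A, ‖p - (-x)‖ ≤ t * R := by
    rintro p ⟨q, hq, rfl⟩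
    have h1 : t • q - x - (-x) = t • q := by abel
    rw [h1, norm_smul, Real.norm_eq_abs, abs_of_pos ht0]
    exact mul_le_mul_of_nonneg_left (mem_closedBall_zero_iff.mp (hPR hq)) (le_of_lt ht0)
  obtain ⟨F, hFcoe, hFim, hFup, hFlo⟩ := stmt13_count d A (-x) (t * R) hA
  have hNcard : Set.ncard (A ∩ {p : Fin d → ℝ | ∀ i, ∃ n : ℤ, p i = n}) = F.card := by
    rw [hFim, Set.ncard_image_of_injective _ (stmt13_lat_inj d), Set.ncard_coe_finset]
  -- outer inclusion
  have hrpos : (0:ℝ) < t + ρ⁻¹ := by linarith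
  have houter : A + stmt13_cell (0 : Fin d → ℤ) ⊆
      ((t • c - x) - (t + ρ⁻¹) • c) +ᵥ ((t + ρ⁻¹) • P) := by
    rintro p hp
    rw [Set.mem_add] at hp
    obtain ⟨p₁, hp₁, w, hw, rfl⟩ := hp
    obtain ⟨q, hq, rfl⟩ := hp₁
    have hwn : ‖w‖ ≤ 1 := stmt13_cell0_norm hw
    have hcw : c + ρ • w ∈ P := by
      apply hball
      rw [Metric.mem_closedBall, dist_eq_norm]
      have : c + ρ • w - c = ρ • w := by abel
      rw [this, norm_smul, Real.norm_eq_abs, abs_of_pos hρ0]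
      nlinarith
    set z : Fin d → ℝ := (t/(t+ρ⁻¹)) • q + (ρ⁻¹/(t+ρ⁻¹)) • (c + ρ • w) with hzdef
    have hz : z ∈ P := by
      apply hconv hq hcw
      · positivity
      · positivity
      · field_simp
    refine Set.mem_vadd_set.mpr ⟨(t + ρ⁻¹) • z, Set.smul_mem_smul_set hz, ?_⟩
    rw [vadd_eq_add, hzdef]
    have hne : t + ρ⁻¹ ≠ 0 := ne_of_gt hrpos
    have hρne : ρ ≠ 0 := ne_of_gt hρ0
    match_scalars
    all_goals field_simp
    all_goals ring
  have hμouter : volume (A + stmt13_cell (0 : Fin d → ℤ)) ≤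
      ENNReal.ofReal ((t+ρ⁻¹)^d) * volume P := by
    calc volume (A + stmt13_cell (0 : Fin d → ℤ))
        ≤ volume (((t • c - x) - (t + ρ⁻¹) • c) +ᵥ ((t + ρ⁻¹) • P)) := measure_mono houter
      _ = volume ((t + ρ⁻¹) • P) := htrans _ _
      _ = ENNReal.ofReal |(t+ρ⁻¹)^(Module.finrank ℝ (Fin d → ℝ))| * volume P :=
          Measure.addHaar_smul volume _ _
      _ = ENNReal.ofReal ((t+ρ⁻¹)^d) * volume P := by
          rw [hfinrank, abs_of_pos (pow_pos hrpos d)]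
  have h1R : (F.card : ℝ) ≤ (t+ρ⁻¹)^d * vP := by
    have hle := le_trans hFup hμouter
    have hne : ENNReal.ofReal ((t+ρ⁻¹)^d) * volume P ≠ ⊤ :=
      ENNReal.mul_ne_top ENNReal.ofReal_ne_top hμPfin
    have h2 := ENNReal.toReal_mono hne hle
    rwa [ENNReal.toReal_natCast, ENNReal.toReal_mul,
      ENNReal.toReal_ofReal (by positivity)] at h2
  -- final bound
  rw [hNcard]
  have h0 : (0:ℝ) ≤ t ^ (d-1) := by positivity
  have hN0 : (0:ℝ) ≤ (F.card : ℝ) := Nat.cast_nonneg _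
  have hpowU := stmt13_pow_aux d ht1 hρinv0 (le_of_lt ht0) (le_refl t)
  have hCnn : (0:ℝ) ≤ (1+ρ⁻¹)^d - 1 := by
    have : (1:ℝ) ≤ (1+ρ⁻¹)^d := one_le_pow₀ (by linarith)
    linarith
  rw [abs_sub_le_iff]
  constructor
  · -- upper deviation
    have hm := mul_le_mul_of_nonneg_right hpowU hvP0
    have hc : (vP * ((1+ρ⁻¹)^d - 1)) * t^(d-1) ≤ (vP * ((1+ρ⁻¹)^d + ρ⁻¹)) * t^(d-1) := by
      apply mul_le_mul_of_nonneg_right _ h0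
      nlinarith
    nlinarith [h1R]
  · -- lower deviation
    rcases le_total ρ⁻¹ t with hcase | hcase
    · -- inner body argument
      have hsub0 : (0:ℝ) ≤ t - ρ⁻¹ := by linarith
      have hinner : ((t • c - x) - (t - ρ⁻¹) • c) +ᵥ ((t - ρ⁻¹) • P) ⊆
          {y : Fin d → ℝ | ∀ w : Fin d → ℝ, ‖w - y‖ ≤ 1 → w ∈ A} := by
        rintro y hy
        obtain ⟨y₁, hy₁, rfl⟩ := Set.mem_vadd_set.mp hy
        obtain ⟨z, hz, rfl⟩ := hy₁
        intro w hwd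
        set y : Fin d → ℝ := ((t • c - x) - (t - ρ⁻¹) • c) +ᵥ (t - ρ⁻¹) • z with hydef
        have hcw : c + ρ • (w - y) ∈ P := by
          apply hball
          rw [Metric.mem_closedBall, dist_eq_norm]
          have : c + ρ • (w - y) - c = ρ • (w - y) := by abel
          rw [this, norm_smul, Real.norm_eq_abs, abs_of_pos hρ0]
          nlinarith
        set q : Fin d → ℝ := ((t-ρ⁻¹)/t) • z + (ρ⁻¹/t) • (c + ρ • (w - y)) with hqdef
        have hqP : q ∈ P := by
          apply hconv hz hcw
          · positivity
          · positivity
          · field_simp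
            try ring
        refine ⟨q, hqP, ?_⟩
        rw [hqdef, hydef]
        have htne : t ≠ 0 := ne_of_gt ht0
        have hρne : ρ ≠ 0 := ne_of_gt hρ0
        rw [vadd_eq_add]
        match_scalars
        all_goals field_simp
        all_goals ring
      have hμinner : ENNReal.ofReal ((t-ρ⁻¹)^d) * volume P ≤
          volume {y : Fin d → ℝ | ∀ w : Fin d → ℝ, ‖w - y‖ ≤ 1 → w ∈ A} := by
        calc ENNReal.ofReal ((t-ρ⁻¹)^d) * volume P
            = ENNReal.ofReal |(t-ρ⁻¹)^(Module.finrank ℝ (Fin d → ℝ))| * volume P := by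
              rw [hfinrank, abs_of_nonneg (pow_nonneg hsub0 d)]
          _ = volume ((t - ρ⁻¹) • P) := (Measure.addHaar_smul volume _ _).symm
          _ = volume (((t • c - x) - (t - ρ⁻¹) • c) +ᵥ ((t - ρ⁻¹) • P)) :=
              (htrans _ _).symm
          _ ≤ _ := measure_mono hinner
      have h2R : (t-ρ⁻¹)^d * vP ≤ (F.card : ℝ) := by
        have hle := le_trans hμinner hFlo
        have hne : ((F.card : ℕ) : ℝ≥0∞) ≠ ⊤ := ENNReal.natCast_ne_top _
        have h2 := ENNReal.toReal_mono hne hle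
        rwa [ENNReal.toReal_natCast, ENNReal.toReal_mul,
          ENNReal.toReal_ofReal (by positivity)] at h2
      have hpowL := stmt13_pow_aux d ht1 hρinv0 hsub0 (by linarith : t - ρ⁻¹ ≤ t)
      rw [sub_add_cancel] at hpowL
      have hm := mul_le_mul_of_nonneg_right hpowL hvP0
      have hc : (vP * ((1+ρ⁻¹)^d - 1)) * t^(d-1) ≤ (vP * ((1+ρ⁻¹)^d + ρ⁻¹)) * t^(d-1) := by
        apply mul_le_mul_of_nonneg_right _ h0
        nlinarith
      nlinarith [h2R]
    · -- small t
      have htd : t^d ≤ ρ⁻¹ * t^(d-1) := by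
        cases d with
        | zero => simpa using hρinv1
        | succ e =>
          have : t^(e+1) = t^e * t := pow_succ t e
          rw [this]
          have h2 : t^e * t ≤ t^e * ρ⁻¹ :=
            mul_le_mul_of_nonneg_left hcase (pow_nonneg (le_of_lt ht0) e)
          have h3 : (e+1) - 1 = e := rfl
          rw [h3]
          linarith [h2]
      have hm := mul_le_mul_of_nonneg_left htd hvP0
      have hc : vP * ρ⁻¹ ≤ vP * ((1+ρ⁻¹)^d + ρ⁻¹) := by nlinarith [pow_nonneg (by linarith : (0:ℝ) ≤ 1+ρ⁻¹) d]
      nlinarith [mul_le_mul_of_nonneg_right hc h0]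


/-- trivial lattice point count for translated dilates of a polytope,
uniform in the translation. -/
theorem stmt13 (d : ℕ) (V : Finset (Fin d → ℝ)) :
    ∃ K : ℝ, ∀ x : Fin d → ℝ, ∀ t : ℝ, 1 < t →
      |(Set.ncard ({p : Fin d → ℝ |
            ∃ q ∈ convexHull ℝ (V : Set (Fin d → ℝ)), p = t • q - x} ∩
          {p : Fin d → ℝ | ∀ i, ∃ n : ℤ, p i = n}) : ℝ) -
        (MeasureTheory.volume (convexHull ℝ (V : Set (Fin d → ℝ)))).toReal * t ^ d|
        ≤ K * t ^ (d - 1) := by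
  classical
  rcases V.eq_empty_or_nonempty with rfl | ⟨v₀, hv₀⟩
  · refine ⟨0, fun x t ht => ?_⟩
    have h1 : convexHull ℝ ((↑(∅ : Finset (Fin d → ℝ))) : Set (Fin d → ℝ)) = ∅ := by
      rw [Finset.coe_empty, convexHull_empty]
    rw [h1]
    have h2 : {p : Fin d → ℝ | ∃ q ∈ (∅ : Set (Fin d → ℝ)), p = t • q - x} = ∅ := by
      ext p; simp
    rw [h2, Set.empty_inter, Set.ncard_empty, measure_empty]
    norm_num
  · obtain ⟨R₀, hR₀⟩ :=
      (V.finite_toSet.isCompact_convexHull ℝ).isBounded.subset_closedBall 0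
    set R := max R₀ 1 with hRdef
    have hR1 : (1:ℝ) ≤ R := le_max_right _ _
    have hPR : convexHull ℝ (V : Set (Fin d → ℝ)) ⊆ Metric.closedBall 0 R :=
      subset_trans hR₀ (Metric.closedBall_subset_closedBall (le_max_left _ _))
    by_cases hint : (interior (convexHull ℝ (V : Set (Fin d → ℝ)))).Nonempty
    · obtain ⟨c, hc⟩ := hint
      obtain ⟨ε, hε0, hεsub⟩ := Metric.isOpen_iff.mp isOpen_interior c hc
      set ρ := min (ε/2) 1 with hρdef
      have hρ0 : 0 < ρ := lt_min (by linarith) one_pos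
      have hρ1 : ρ ≤ 1 := min_le_right _ _
      have hρε : ρ < ε := lt_of_le_of_lt (min_le_left _ _) (by linarith)
      have hball : Metric.closedBall c ρ ⊆ convexHull ℝ (V : Set (Fin d → ℝ)) :=
        subset_trans (Metric.closedBall_subset_ball hρε)
          (subset_trans hεsub interior_subset)
      exact stmt13_nondegenerate d V R hR1 hPR c ρ hρ0 hρ1 hball
    · exact stmt13_degenerate d V v₀ hv₀ R hR1 hPR hint
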